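/- For every function f : ℕ+ → ℕ+, the group 𝒬(f) is trivial if and only if every forward orbit of f contains 1. -/

import Mathlib

/-- The relators of the presentation `𝒬(f)`: the word `a₁`, together with the words
`a_{i+1} a_{f(i+1)}⁻¹` for `i ∈ ℕ+`. -/
def Qrels (f : ℕ+ → ℕ+) : Set (FreeGroup ℕ+) :=
  {FreeGroup.of 1} ∪
    {r | ∃ i : ℕ+, r = FreeGroup.of (i + 1) * (FreeGroup.of (f (i + 1)))⁻¹}

lemma Qrels_of_one (f : ℕ+ → ℕ+) :
    (PresentedGroup.of 1 : PresentedGroup (Qrels f)) = 1 := by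
  have : FreeGroup.of (1 : ℕ+) ∈ Subgroup.normalClosure (Qrels f) :=
    Subgroup.subset_normalClosure (Or.inl rfl)
  exact (QuotientGroup.eq_one_iff _).mpr this

lemma Qrels_of_succ (f : ℕ+ → ℕ+) (i : ℕ+) :
    (PresentedGroup.of (i + 1) : PresentedGroup (Qrels f)) =
      PresentedGroup.of (f (i + 1)) := by
  have : FreeGroup.of (i + 1) * (FreeGroup.of (f (i + 1)))⁻¹ ∈
      Subgroup.normalClosure (Qrels f) :=
    Subgroup.subset_normalClosure (Or.inr ⟨i, rfl⟩)
  have h := (QuotientGroup.eq_one_iff _).mpr this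
  have h' : (PresentedGroup.of (i + 1) : PresentedGroup (Qrels f)) *
      (PresentedGroup.of (f (i + 1)))⁻¹ = 1 := h
  exact mul_inv_eq_one.mp h'

lemma orbit_iff (f : ℕ+ → ℕ+) (j : ℕ+) (hj : j ≠ 1) :
    (∃ n, f^[n] j = 1) ↔ (∃ n, f^[n] (f j) = 1) := by
  constructor
  · rintro ⟨n, hn⟩
    cases n with
    | zero => exact absurd hn hj
    | succ n => exact ⟨n, by simpa [Function.iterate_succ_apply] using hn⟩
  · rintro ⟨n, hn⟩
    exact ⟨n + 1, by simpa [Function.iterate_succ_apply] using hn⟩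

theorem stmt_17 (f : ℕ+ → ℕ+) :
    (∀ g : PresentedGroup (Qrels f), g = 1) ↔
      ∀ i : ℕ+, ∃ n : ℕ, f^[n] i = 1 := by
  classical
  constructor
  · intro htriv
    -- map to Multiplicative ℤ
    by_contra hcon
    push_neg at hcon
    obtain ⟨i0, hi0⟩ := hcon
    set φ : ℕ+ → Multiplicative ℤ := fun j =>
      if ∃ n, f^[n] j = 1 then 1 else Multiplicative.ofAdd 1 with hφ
    have hrels : ∀ r ∈ Qrels f, FreeGroup.lift φ r = 1 := by
      rintro r (rfl | ⟨i, rfl⟩)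
      · simp only [FreeGroup.lift_apply_of, hφ]
        rw [if_pos ⟨0, rfl⟩]
      · have h1 : i + 1 ≠ (1 : ℕ+) := (PNat.lt_add_left 1 i).ne'
        simp only [map_mul, map_inv, FreeGroup.lift_apply_of, hφ]
        by_cases hc : ∃ n, f^[n] (i + 1) = 1
        · rw [if_pos hc, if_pos ((orbit_iff f (i+1) h1).mp hc)]; simp
        · rw [if_neg hc, if_neg (fun h => hc ((orbit_iff f (i+1) h1).mpr h))]; simp
    have := htriv (PresentedGroup.of i0)
    have h2 := congrArg (PresentedGroup.toGroup hrels) this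
    rw [PresentedGroup.toGroup.of, map_one] at h2
    rw [hφ] at h2
    simp only [if_neg (not_exists.mpr hi0)] at h2
    have := congrArg Multiplicative.toAdd h2
    simp at this
  · intro horb
    have key : ∀ n (j : ℕ+), f^[n] j = 1 →
        (PresentedGroup.of j : PresentedGroup (Qrels f)) = 1 := by
      intro n
      induction n with
      | zero => intro j hj; rw [show j = 1 from hj]; exact Qrels_of_one f
      | succ n ih =>
        intro j hj
        by_cases h1 : j = 1
        · rw [h1]; exact Qrels_of_one f
        · obtain ⟨i, rfl⟩ : ∃ i : ℕ+, j = i + 1 := by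
            refine ⟨j - 1, ?_⟩
            rw [PNat.sub_add_of_lt]
            exact lt_of_le_of_ne j.one_le (Ne.symm h1)
          rw [Qrels_of_succ f i]
          exact ih _ (by simpa [Function.iterate_succ_apply] using hj)
    have gen : ∀ j : ℕ+, (PresentedGroup.of j : PresentedGroup (Qrels f)) = 1 := by
      intro j; obtain ⟨n, hn⟩ := horb j; exact key n j hn
    intro g
    obtain ⟨x, rfl⟩ := QuotientGroup.mk'_surjective (Subgroup.normalClosure (Qrels f)) g
    induction x using FreeGroup.induction_on with
    | C1 => exact map_one _
    | of j => exact gen j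
    | inv_of j hj =>
        rw [map_inv]; refine inv_eq_one.mpr ?_
        exact gen j
    | mul x y hx hy => rw [map_mul, hx, hy]; exact one_mul _
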